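/- Let ℓ ≥ 1 and 0 ≤ r ≤ ℓ. Let M ∈ ℂ^{ℓ×ℓ} be a matrix of rank at most r, and suppose the associated polynomial h(x,y) = Σ_{0≤i,j<ℓ} M_{ij} x^i y^j ∈ ℂ[x,y] is divisible by (x − y)^r. Then M = 0. -/

import Mathlib

open Matrix
open scoped ComplexOrder

/-- Frobenius norm of a real matrix: `‖A‖ = √(trace (A Aᵀ))`. -/
noncomputable def frobR {n l : ℕ} (A : Matrix (Fin n) (Fin l) ℝ) : ℝ :=
  Real.sqrt (Matrix.trace (A * Aᵀ))

/-- Frobenius norm of a complex matrix: `‖A‖ = √(trace (A Aᴴ))`. -/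
noncomputable def frobC {n l : ℕ} (A : Matrix (Fin n) (Fin l) ℂ) : ℝ :=
  Real.sqrt (Matrix.trace (A * Aᴴ)).re

open Classical in
/-- The unique positive semidefinite square root of a positive semidefinite real
symmetric matrix (junk value `0` if `M` is not positive semidefinite). -/
noncomputable def matSqrtR {k : ℕ} (M : Matrix (Fin k) (Fin k) ℝ) : Matrix (Fin k) (Fin k) ℝ :=
  if h : M.PosSemidef then
    (h.1.eigenvectorUnitary : Matrix (Fin k) (Fin k) ℝ) *
      Matrix.diagonal ((RCLike.ofReal : ℝ → ℝ) ∘ Real.sqrt ∘ h.1.eigenvalues) *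
      (star h.1.eigenvectorUnitary : Matrix (Fin k) (Fin k) ℝ) else 0

open Classical in
/-- The unique positive semidefinite square root of a positive semidefinite hermitian
matrix (junk value `0` if `M` is not positive semidefinite). -/
noncomputable def matSqrtC {k : ℕ} (M : Matrix (Fin k) (Fin k) ℂ) : Matrix (Fin k) (Fin k) ℂ :=
  if h : M.PosSemidef then
    (h.1.eigenvectorUnitary : Matrix (Fin k) (Fin k) ℂ) *
      Matrix.diagonal ((RCLike.ofReal : ℝ → ℂ) ∘ Real.sqrt ∘ h.1.eigenvalues) *
      (star h.1.eigenvectorUnitary : Matrix (Fin k) (Fin k) ℂ) else 0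

/-- Orbit distance for the orthogonal group `O(n)` acting by left multiplication. -/
noncomputable def dO {n l : ℕ} (A B : Matrix (Fin n) (Fin l) ℝ) : ℝ :=
  sInf {x | ∃ W ∈ Matrix.orthogonalGroup (Fin n) ℝ, x = frobR (W * A - B)}

/-- Orbit distance for the unitary group `U(n)` acting by left multiplication. -/
noncomputable def dU {n l : ℕ} (A B : Matrix (Fin n) (Fin l) ℂ) : ℝ :=
  sInf {x | ∃ W ∈ Matrix.unitaryGroup (Fin n) ℂ, x = frobC (W * A - B)}

/-- `q𝟙ᵀ` : the `n × l` matrix each of whose columns equals `q` (real case). -/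
def colMatR {n l : ℕ} (q : Fin n → ℝ) : Matrix (Fin n) (Fin l) ℝ :=
  Matrix.of fun i _ => q i

/-- `q𝟙ᵀ` : the `n × l` matrix each of whose columns equals `q` (complex case). -/
def colMatC {n l : ℕ} (q : Fin n → ℂ) : Matrix (Fin n) (Fin l) ℂ :=
  Matrix.of fun i _ => q i

/-- Orbit distance for the euclidean group `E(n) = O(n) ⋉ ℝⁿ` acting columnwise. -/
noncomputable def dE {n l : ℕ} (A B : Matrix (Fin n) (Fin l) ℝ) : ℝ :=
  sInf {x | ∃ P ∈ Matrix.orthogonalGroup (Fin n) ℝ, ∃ q : Fin n → ℝ,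
    x = frobR (P * A + colMatR q - B)}

/-- Orbit distance for the complex euclidean group `F(n) = U(n) ⋉ ℂⁿ` acting columnwise. -/
noncomputable def dF {n l : ℕ} (A B : Matrix (Fin n) (Fin l) ℂ) : ℝ :=
  sInf {x | ∃ P ∈ Matrix.unitaryGroup (Fin n) ℂ, ∃ q : Fin n → ℂ,
    x = frobC (P * A + colMatC q - B)}

/-- Column-centering `π` : subtract from each column the average of all columns (real case). -/
noncomputable def centerR {n l : ℕ} (A : Matrix (Fin n) (Fin l) ℝ) : Matrix (Fin n) (Fin l) ℝ :=
  Matrix.of fun i j => A i j - (∑ k, A i k) / (l : ℝ)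

/-- Column-centering `π_ℂ` : subtract from each column the average of all columns (complex case). -/
noncomputable def centerC {n l : ℕ} (A : Matrix (Fin n) (Fin l) ℂ) : Matrix (Fin n) (Fin l) ℂ :=
  Matrix.of fun i j => A i j - (∑ k, A i k) / (l : ℂ)

section Aux17
open Polynomial Submodule Module

lemma coeff_sum_CX {S : Type*} [Semiring S] {l : ℕ} (v : Fin l → S) (k : ℕ) :
    (∑ i : Fin l, Polynomial.C (v i) * Polynomial.X ^ (i : ℕ)).coeff k =
      if hk : k < l then v ⟨k, hk⟩ else 0 := by
  rw [finset_sum_coeff]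
  simp only [coeff_C_mul, coeff_X_pow]
  split
  · next hk =>
    rw [Finset.sum_eq_single (⟨k, hk⟩ : Fin l)]
    · simp
    · intro b _ hb
      have : ¬ (k = (b : ℕ)) := fun h => hb (Fin.ext h.symm)
      simp [this]
    · simp
  · next hk =>
    apply Finset.sum_eq_zero
    intro b _
    have : ¬ (k = (b : ℕ)) := by have := b.isLt; omega
    simp [this]

lemma dvd_deriv {R : Type*} [CommRing R] {p h : Polynomial R} {n : ℕ}
    (hd : p ^ (n + 1) ∣ h) : p ^ n ∣ derivative h := by
  obtain ⟨q, rfl⟩ := hd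
  rw [derivative_mul, derivative_pow]
  refine dvd_add ?_ ?_
  · simp only [Nat.add_sub_cancel]
    exact ((dvd_mul_left (p ^ n) _).mul_right _).mul_right _
  · exact ((pow_dvd_pow p (Nat.le_succ n)).mul_right _)

lemma WZ (p q : Polynomial ℂ) (hp : p ≠ 0)
    (hw : p * derivative q - derivative p * q = 0) : ∃ c : ℂ, q = c • p := by
  by_cases hq : q = 0
  · exact ⟨0, by simp [hq]⟩
  · set d := GCDMonoid.gcd p q with hd
    have hd0 : d ≠ 0 := by intro h; exact hp ((gcd_eq_zero_iff p q).mp h).1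
    set a := p / d with hadef
    set b := q / d with hbdef
    have ha : p = d * a := (EuclideanDomain.mul_div_cancel' hd0 (gcd_dvd_left p q)).symm
    have hb : q = d * b := (EuclideanDomain.mul_div_cancel' hd0 (gcd_dvd_right p q)).symm
    have hcop : IsCoprime a b := isCoprime_div_gcd_div_gcd hq
    have ha0 : a ≠ 0 := fun h => hp (by rw [ha, h, mul_zero])
    have hb0 : b ≠ 0 := fun h => hq (by rw [hb, h, mul_zero])
    have key : a * derivative b = derivative a * b := by
      have h2 : d ^ 2 * (a * derivative b - derivative a * b) = 0 := by
        rw [← hw, ha, hb, derivative_mul, derivative_mul]; ring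
      have := (mul_eq_zero.mp h2).resolve_left (pow_ne_zero 2 hd0)
      linear_combination this
    -- a ∣ derivative a
    have hda : derivative a = 0 := by
      by_contra hda
      have h1 : a ∣ derivative a := by
        have h0 : a ∣ derivative a * b := ⟨derivative b, key.symm⟩
        exact hcop.dvd_of_dvd_mul_right h0
      have h2 : a.natDegree ≤ (derivative a).natDegree := natDegree_le_of_dvd h1 hda
      have h3 : a.natDegree ≠ 0 := fun h => hda (by
        rw [eq_C_of_natDegree_eq_zero h]; simp)
      exact absurd (natDegree_derivative_lt h3) (by omega)
    have hdb : derivative b = 0 := by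
      by_contra hdb
      have h1 : b ∣ derivative b := by
        have h0 : b ∣ derivative b * a := ⟨derivative a, by linear_combination key⟩
        exact (hcop.symm).dvd_of_dvd_mul_right h0
      have h2 : b.natDegree ≤ (derivative b).natDegree := natDegree_le_of_dvd h1 hdb
      have h3 : b.natDegree ≠ 0 := fun h => hdb (by
        rw [eq_C_of_natDegree_eq_zero h]; simp)
      exact absurd (natDegree_derivative_lt h3) (by omega)
    obtain ⟨ca, hca⟩ := natDegree_eq_zero.mp (natDegree_eq_zero_of_derivative_eq_zero hda)
    obtain ⟨cb, hcb⟩ := natDegree_eq_zero.mp (natDegree_eq_zero_of_derivative_eq_zero hdb)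
    have hca0 : ca ≠ 0 := fun h => ha0 (by rw [← hca, h, map_zero])
    refine ⟨cb / ca, ?_⟩
    have hCC : (C (cb / ca) : Polynomial ℂ) * C ca = C cb := by
      rw [← _root_.map_mul]; congr 1; field_simp
    rw [hb, ha, smul_eq_C_mul, ← hcb, ← hca, ← hCC]; ring

lemma coeff_sum_CXr {S : Type*} [Semiring S] (n : ℕ) (c : ℕ → S) (k : ℕ) :
    (∑ j ∈ Finset.range n, Polynomial.C (c j) * Polynomial.X ^ j).coeff k =
      if k < n then c k else 0 := by
  rw [finset_sum_coeff]
  simp only [coeff_C_mul, coeff_X_pow]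
  split
  · next hk =>
    rw [Finset.sum_eq_single k]
    · simp
    · intro b _ hb; simp [Ne.symm hb]
    · intro hk'; exact absurd (Finset.mem_range.mpr hk) hk'
  · next hk =>
    apply Finset.sum_eq_zero
    intro b hb
    have : ¬ (k = b) := by have := Finset.mem_range.mp hb; omega
    simp [this]

lemma DEC (h : Polynomial (Polynomial ℂ)) (s : ℕ)
    (hs : finrank ℂ (span ℂ (Set.range h.coeff)) = s) :
    ∃ (f : Fin s → Polynomial ℂ) (g : Fin s → Polynomial ℂ),
      LinearIndependent ℂ f ∧ LinearIndependent ℂ g ∧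
      h = ∑ i, Polynomial.C (f i) * (g i).map Polynomial.C := by
  classical
  set n := h.natDegree with hn
  have hfin : (Set.range h.coeff).Finite := by
    apply Set.Finite.subset (Set.Finite.insert 0 ((Set.finite_Iic n).image h.coeff))
    rintro - ⟨j, rfl⟩
    by_cases hj : j ≤ n
    · exact Set.mem_insert_of_mem _ ⟨j, hj, rfl⟩
    · left
      exact h.coeff_eq_zero_of_natDegree_lt (by omega)
  set W := span ℂ (Set.range h.coeff) with hW
  haveI : FiniteDimensional ℂ W := FiniteDimensional.span_of_finite ℂ hfin
  let b : Basis (Fin s) ℂ W := Module.finBasisOfFinrankEq ℂ W hs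
  let f : Fin s → Polynomial ℂ := fun i => (b i : Polynomial ℂ)
  have hf : LinearIndependent ℂ f :=
    b.linearIndependent.map' W.subtype (Submodule.ker_subtype W)
  let w : ℕ → W := fun j => ⟨h.coeff j, subset_span (Set.mem_range_self j)⟩
  let g : Fin s → Polynomial ℂ := fun i =>
    ∑ j ∈ Finset.range (n + 1), Polynomial.C (b.repr (w j) i) * Polynomial.X ^ j
  have hgcoeff : ∀ i k, (g i).coeff k = if k < n + 1 then b.repr (w k) i else 0 := by
    intro i k
    exact coeff_sum_CXr (n + 1) (fun j => b.repr (w j) i) k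
  have hwk : ∀ k, ((w k : Polynomial ℂ)) = h.coeff k := fun k => rfl
  have hw0 : ∀ k, n < k → w k = 0 := by
    intro k hk
    apply Subtype.ext
    exact h.coeff_eq_zero_of_natDegree_lt hk
  have hsum : ∀ k, (∑ i, b.repr (w k) i • f i) = h.coeff k := by
    intro k
    have : (∑ i, b.repr (w k) i • f i) = ((∑ i, b.repr (w k) i • b i : W) : Polynomial ℂ) := by
      push_cast
      rfl
    rw [this, b.sum_repr (w k)]
  have hg : LinearIndependent ℂ g := by
    rw [Fintype.linearIndependent_iff]
    intro lam hlam i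
    let φ : W →ₗ[ℂ] ℂ := ∑ k, lam k • b.coord k
    have hφ : ∀ v : W, φ v = ∑ k, lam k * b.repr v k := by
      intro v
      simp [φ, LinearMap.sum_apply, Basis.coord_apply]
    have hφw : ∀ j, φ (w j) = 0 := by
      intro j
      by_cases hj : j < n + 1
      · have hc : (∑ i, lam i • g i).coeff j = 0 := by rw [hlam]; simp
        rw [finset_sum_coeff] at hc
        simp only [coeff_smul, hgcoeff, hj, if_true, smul_eq_mul] at hc
        rw [hφ]; exact hc
      · rw [hw0 j (by omega), map_zero]
    have htop : span ℂ (Set.range w) = (⊤ : Submodule ℂ W) := by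
      apply Submodule.map_injective_of_injective (Submodule.injective_subtype W)
      rw [Submodule.map_span, Submodule.map_top, Submodule.range_subtype]
      have : W.subtype '' Set.range w = Set.range h.coeff := by
        rw [← Set.range_comp]
        rfl
      rw [this]
    have hφ0 : φ = 0 := LinearMap.ext_on htop (by rintro - ⟨j, rfl⟩; exact hφw j)
    have : φ (b i) = lam i := by
      rw [hφ]
      rw [Finset.sum_eq_single i]
      · simp
      · intro k _ hk; simp [Basis.repr_self, Finsupp.single_apply, Ne.symm hk]
      · simp
    rw [hφ0] at this
    simpa using this.symm
  refine ⟨f, g, hf, hg, ?_⟩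
  apply Polynomial.ext
  intro k
  rw [finset_sum_coeff]
  have hterm : ∀ i : Fin s, (Polynomial.C (f i) * (g i).map Polynomial.C).coeff k =
      f i * Polynomial.C ((g i).coeff k) := by
    intro i
    rw [coeff_C_mul, coeff_map]
  simp only [hterm, hgcoeff]
  by_cases hk : k < n + 1
  · simp only [hk, if_true]
    rw [← hsum k]
    apply Finset.sum_congr rfl
    intro i _
    rw [smul_eq_C_mul, mul_comm]
  · simp only [hk, if_false, map_zero, mul_zero, Finset.sum_const_zero]
    exact h.coeff_eq_zero_of_natDegree_lt (show h.natDegree < k by omega)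

lemma range_coeff_finite {S : Type*} [Semiring S] (h : Polynomial S) :
    (Set.range h.coeff).Finite := by
  apply Set.Finite.subset (Set.Finite.insert 0 ((Set.finite_Iic h.natDegree).image h.coeff))
  rintro - ⟨j, rfl⟩
  by_cases hj : j ≤ h.natDegree
  · exact Set.mem_insert_of_mem _ ⟨j, hj, rfl⟩
  · left
    exact h.coeff_eq_zero_of_natDegree_lt (by omega)

lemma KL : ∀ (s : ℕ) (h : Polynomial (Polynomial ℂ)),
    finrank ℂ (span ℂ (Set.range h.coeff)) ≤ s →
    (Polynomial.C Polynomial.X - Polynomial.X) ^ s ∣ h → h = 0 := by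
  intro s
  induction s with
  | zero =>
    intro h hrk _
    haveI : FiniteDimensional ℂ (span ℂ (Set.range h.coeff)) :=
      FiniteDimensional.span_of_finite ℂ (range_coeff_finite h)
    have hbot : span ℂ (Set.range h.coeff) = ⊥ :=
      Submodule.finrank_eq_zero.mp (Nat.le_zero.mp hrk)
    apply Polynomial.ext
    intro k
    have : h.coeff k ∈ (⊥ : Submodule ℂ (Polynomial ℂ)) :=
      hbot ▸ subset_span (Set.mem_range_self k)
    simpa using this
  | succ s IH =>
    intro h hrk hdvd
    by_cases hle : finrank ℂ (span ℂ (Set.range h.coeff)) ≤ s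
    · exact IH h hle ((pow_dvd_pow _ (Nat.le_succ s)).trans hdvd)
    · have hs : finrank ℂ (span ℂ (Set.range h.coeff)) = s + 1 := by omega
      obtain ⟨f, g, hf, hg, hh⟩ := DEC h (s + 1) hs
      set gs := g (Fin.last s) with hgs
      set G : Fin s → Polynomial ℂ := fun i =>
        gs * derivative (g i.castSucc) - derivative gs * g i.castSucc with hGdef
      set ht : Polynomial (Polynomial ℂ) :=
        (gs.map Polynomial.C) * derivative h - ((derivative gs).map Polynomial.C) * h with htdef
      have step1 : ht = ∑ i : Fin (s + 1), Polynomial.C (f i) *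
          ((gs * derivative (g i) - derivative gs * g i).map Polynomial.C) := by
        rw [htdef, hh, derivative_sum]
        simp only [derivative_C_mul, derivative_map]
        rw [Finset.mul_sum, Finset.mul_sum, ← Finset.sum_sub_distrib]
        apply Finset.sum_congr rfl
        intro i _
        simp only [Polynomial.map_sub, Polynomial.map_mul]
        ring
      have hA : ht = ∑ i : Fin s, Polynomial.C (f i.castSucc) * ((G i).map Polynomial.C) := by
        rw [step1, Fin.sum_univ_castSucc]
        have hz : gs * derivative (g (Fin.last s)) - derivative gs * g (Fin.last s) = 0 := by
          rw [← hgs]; ring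
        rw [hz]
        simp [hGdef]
      have hcoeff_ht : ∀ k, ht.coeff k = ∑ i : Fin s, ((G i).coeff k) • f i.castSucc := by
        intro k
        rw [hA, finset_sum_coeff]
        apply Finset.sum_congr rfl
        intro i _
        rw [coeff_C_mul, coeff_map, smul_eq_C_mul, mul_comm]
      have hBdvd : (Polynomial.C Polynomial.X - Polynomial.X) ^ s ∣ ht := by
        have h1 : (Polynomial.C Polynomial.X - Polynomial.X) ^ s ∣ derivative h := dvd_deriv hdvd
        exact dvd_sub (h1.mul_left _) (((pow_dvd_pow _ (Nat.le_succ s)).trans hdvd).mul_left _)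
      have hrk2 : finrank ℂ (span ℂ (Set.range ht.coeff)) ≤ s := by
        have hle2 : span ℂ (Set.range ht.coeff) ≤ span ℂ (Set.range (f ∘ Fin.castSucc)) := by
          rw [span_le]
          rintro - ⟨k, rfl⟩
          rw [hcoeff_ht]
          exact sum_smul_mem _ _ (fun i _ => subset_span ⟨i, rfl⟩)
        haveI : FiniteDimensional ℂ (span ℂ (Set.range (f ∘ Fin.castSucc))) :=
          FiniteDimensional.span_of_finite ℂ (Set.finite_range _)
        refine (Submodule.finrank_mono hle2).trans ?_
        classical
        have h1 := finrank_span_le_card (R := ℂ) (Set.range (f ∘ Fin.castSucc))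
        rw [Set.toFinset_range] at h1
        exact h1.trans ((Finset.card_image_le).trans (by simp))
      have hht0 : ht = 0 := IH ht hrk2 hBdvd
      have hfc : LinearIndependent ℂ (f ∘ Fin.castSucc) :=
        hf.comp _ (Fin.castSucc_injective s)
      have hG0 : ∀ i, G i = 0 := by
        intro i
        apply Polynomial.ext
        intro k
        have hzero : ∑ i : Fin s, ((G i).coeff k) • (f ∘ Fin.castSucc) i = 0 := by
          have := hcoeff_ht k
          rw [hht0] at this
          simpa using this.symm
        simpa using Fintype.linearIndependent_iff.mp hfc _ hzero i
      rcases Nat.eq_zero_or_pos s with rfl | hspos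
      · -- s = 0 case
        have hh1 : h = Polynomial.C (f 0) * (g 0).map Polynomial.C := by
          rw [hh, Fin.sum_univ_one]
        have hev0 : Polynomial.eval (Polynomial.X : Polynomial ℂ) h = 0 := by
          obtain ⟨q, hq⟩ := hdvd
          rw [pow_one] at hq
          rw [hq, eval_mul, eval_sub, eval_C, eval_X, sub_self, zero_mul]
        have hev : Polynomial.eval (Polynomial.X : Polynomial ℂ) h = f 0 * g 0 := by
          rw [hh1, eval_mul, eval_C, eval_map, eval₂_C_X]
        rcases mul_eq_zero.mp (hev.symm.trans hev0) with h0 | h0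
        all_goals rw [hh1]
        · rw [h0]; simp
        · rw [h0]; simp
      · exfalso
        set i0 : Fin s := ⟨0, hspos⟩ with hi0
        have hgs0 : gs ≠ 0 := hg.ne_zero (Fin.last s)
        obtain ⟨c, hc⟩ := WZ gs (g i0.castSucc) hgs0 (hG0 i0)
        have hmem : g i0.castSucc ∈ span ℂ (g '' {Fin.last s}) := by
          rw [Set.image_singleton]
          exact (Submodule.mem_span_singleton).mpr ⟨c, hc.symm⟩
        have hnotin : (i0.castSucc : Fin (s + 1)) ∉ ({Fin.last s} : Set (Fin (s + 1))) := by
          simp only [Set.mem_singleton_iff]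
          intro hcontra
          have : (i0.castSucc : ℕ) = s := by rw [hcontra]; simp
          simp [hi0] at this
          omega
        exact hg.notMem_span_image hnotin hmem


/-- Proposition: if `M ∈ ℂ^{ℓ×ℓ}` has rank `≤ r` and its associated polynomial
`h(x,y) = Σ M_{ij} xⁱ yʲ` is divisible by `(x − y)^r`, then `M = 0`. -/
theorem stmt17 (l r : ℕ) (hl : 1 ≤ l) (hr : r ≤ l)
    (M : Matrix (Fin l) (Fin l) ℂ) (hrank : M.rank ≤ r)
    (hdvd : (MvPolynomial.X 0 - MvPolynomial.X 1) ^ r ∣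
      ∑ i : Fin l, ∑ j : Fin l,
        MvPolynomial.C (M i j) * MvPolynomial.X (0 : Fin 2) ^ (i : ℕ) *
          MvPolynomial.X (1 : Fin 2) ^ (j : ℕ)) :
    M = 0 := by
  classical
  -- the linear map sending a coefficient vector to a polynomial
  let L : (Fin l → ℂ) →ₗ[ℂ] Polynomial ℂ :=
    { toFun := fun v => ∑ i : Fin l, Polynomial.C (v i) * Polynomial.X ^ (i : ℕ)
      map_add' := by
        intro v w
        rw [← Finset.sum_add_distrib]
        apply Finset.sum_congr rfl
        intro i _
        simp [add_mul]
      map_smul' := by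
        intro c v
        show ∑ i : Fin l, Polynomial.C ((c • v) i) * Polynomial.X ^ (i : ℕ) =
          c • ∑ i : Fin l, Polynomial.C (v i) * Polynomial.X ^ (i : ℕ)
        rw [Finset.smul_sum]
        apply Finset.sum_congr rfl
        intro i _
        simp [smul_eq_C_mul, mul_assoc] }
  have hL : Function.Injective L := by
    rw [← LinearMap.ker_eq_bot, LinearMap.ker_eq_bot']
    intro v hv
    funext i
    have := congrArg (fun p => Polynomial.coeff p (i : ℕ)) hv
    simp only [L, LinearMap.coe_mk, AddHom.coe_mk] at this
    rw [coeff_sum_CX] at this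
    simpa [i.isLt] using this
  let cpol : Fin l → Polynomial ℂ := fun j => L (Matrix.transpose M j)
  let H : Polynomial (Polynomial ℂ) :=
    ∑ j : Fin l, Polynomial.C (cpol j) * Polynomial.X ^ (j : ℕ)
  -- transfer divisibility
  let φ := MvPolynomial.aeval (R := ℂ)
    ![(Polynomial.C Polynomial.X : Polynomial (Polynomial ℂ)), Polynomial.X]
  have hφdvd := map_dvd φ hdvd
  have hφsub : φ (MvPolynomial.X 0 - MvPolynomial.X 1) ^ r =
      (Polynomial.C Polynomial.X - Polynomial.X) ^ r := by
    simp [φ]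
  have hφsum : φ (∑ i : Fin l, ∑ j : Fin l,
      MvPolynomial.C (M i j) * MvPolynomial.X (0 : Fin 2) ^ (i : ℕ) *
        MvPolynomial.X (1 : Fin 2) ^ (j : ℕ)) = H := by
    simp only [map_sum]
    rw [Finset.sum_comm]
    apply Finset.sum_congr rfl
    intro j _
    have : Polynomial.C (cpol j) * Polynomial.X ^ (j : ℕ) =
        ∑ i : Fin l, Polynomial.C (Polynomial.C (M i j)) *
          (Polynomial.C (Polynomial.X : Polynomial ℂ)) ^ (i : ℕ) *
            Polynomial.X ^ (j : ℕ) := by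
      rw [← Finset.sum_mul]
      congr 1
      simp only [cpol, L, LinearMap.coe_mk, AddHom.coe_mk, map_sum]
      apply Finset.sum_congr rfl
      intro i _
      rw [_root_.map_mul, map_pow]
      simp [Matrix.transpose_apply]
    rw [this]
    apply Finset.sum_congr rfl
    intro i _
    simp [φ, MvPolynomial.aeval_C, Polynomial.algebraMap_apply]
  rw [map_pow, hφsub, hφsum] at hφdvd
  -- rank bound
  have hcoeffH : ∀ k, H.coeff k = if hk : k < l then cpol ⟨k, hk⟩ else 0 :=
    fun k => coeff_sum_CX cpol k
  have hrkH : finrank ℂ (span ℂ (Set.range H.coeff)) ≤ r := by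
    have hsub : Set.range H.coeff ⊆ insert 0 (Set.range cpol) := by
      rintro - ⟨k, rfl⟩
      rw [hcoeffH]
      split
      · exact Set.mem_insert_of_mem _ (Set.mem_range_self _)
      · exact Set.mem_insert _ _
    have hle : span ℂ (Set.range H.coeff) ≤ span ℂ (Set.range cpol) := by
      refine (span_mono hsub).trans ?_
      rw [Submodule.span_insert_zero]
    have hmap : span ℂ (Set.range cpol) = Submodule.map L (span ℂ (Set.range Mᵀ)) := by
      rw [Submodule.map_span]
      exact congrArg (span ℂ) (Set.range_comp (g := ⇑L) (f := fun j => Mᵀ j))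
    have hfr : finrank ℂ (span ℂ (Set.range cpol)) = M.rank := by
      rw [hmap, M.rank_eq_finrank_span_cols]
      exact (LinearEquiv.finrank_eq (Submodule.equivMapOfInjective L hL _)).symm
    haveI : FiniteDimensional ℂ (span ℂ (Set.range cpol)) :=
      FiniteDimensional.span_of_finite ℂ (Set.finite_range _)
    exact (Submodule.finrank_mono hle).trans (le_of_eq_of_le hfr hrank)
  have hH0 : H = 0 := KL r H hrkH hφdvd
  ext i j
  have hcpol : cpol j = 0 := by
    have := hcoeffH (j : ℕ)
    rw [hH0] at this
    simpa [j.isLt, Fin.eta] using this.symm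
  have := congrArg (fun p => Polynomial.coeff p (i : ℕ)) hcpol
  simp only [cpol, L, LinearMap.coe_mk, AddHom.coe_mk] at this
  rw [coeff_sum_CX] at this
  simpa [i.isLt] using this

end Aux17
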